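/- For all real k > 2πd, |Re(φ̂_d(k))| ≤ (d!)^2 / (2π (k/(2π) - d)^{2d+1}). -/

import Mathlib

open Real

lemma hd_sin (c x : ℝ) : HasDerivAt (fun ℓ : ℝ => Real.sin (c*ℓ)) (c * Real.cos (c*x)) x := by
  have := (Real.hasDerivAt_sin (c*x)).comp x ((hasDerivAt_id x).const_mul c)
  simpa [Function.comp_def, mul_comm] using this

lemma hd_cos (c x : ℝ) : HasDerivAt (fun ℓ : ℝ => Real.cos (c*ℓ)) (-(c * Real.sin (c*x))) x := by
  have := (Real.hasDerivAt_cos (c*x)).comp x ((hasDerivAt_id x).const_mul c)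
  simpa [Function.comp_def, mul_comm] using this

lemma hd_H (e : ℕ) (k x : ℝ) :
    HasDerivAt (fun ℓ : ℝ => k * Real.sin (π*ℓ)^(2*e+2) * Real.sin (k*ℓ)
        + (2*e+2)*π * Real.sin (π*ℓ)^(2*e+1) * Real.cos (π*ℓ) * Real.cos (k*ℓ))
      ((k^2 - (2*e+2)^2*π^2) * Real.sin (π*x)^(2*e+2) * Real.cos (k*x)
        + (2*e+2)*(2*e+1)*π^2 * Real.sin (π*x)^(2*e) * Real.cos (k*x)) x := by
  have h1 : HasDerivAt (fun ℓ : ℝ => k * Real.sin (π*ℓ)^(2*e+2) * Real.sin (k*ℓ))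
      (k * ((2*e+2) * Real.sin (π*x)^(2*e+1) * (π * Real.cos (π*x))) * Real.sin (k*x)
        + k * Real.sin (π*x)^(2*e+2) * (k * Real.cos (k*x))) x := by
    have := (((hd_sin π x).pow (2*e+2)).const_mul k).mul (hd_sin k x)
    refine this.congr_deriv ?_
    simp only [Pi.pow_apply, Pi.mul_apply]
    push_cast
    ring
  have h2 : HasDerivAt (fun ℓ : ℝ => (2*e+2)*π * Real.sin (π*ℓ)^(2*e+1) * Real.cos (π*ℓ) * Real.cos (k*ℓ))
      (((2*e+2)*π * ((2*e+1) * Real.sin (π*x)^(2*e) * (π * Real.cos (π*x))) * Real.cos (π*x)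
          + (2*e+2)*π * Real.sin (π*x)^(2*e+1) * (-(π * Real.sin (π*x)))) * Real.cos (k*x)
        + (2*e+2)*π * Real.sin (π*x)^(2*e+1) * Real.cos (π*x) * (-(k * Real.sin (k*x)))) x := by
    have := ((((hd_sin π x).pow (2*e+1)).const_mul ((2*e+2)*π)).mul (hd_cos π x)).mul (hd_cos k x)
    refine this.congr_deriv ?_
    simp only [Pi.pow_apply, Pi.mul_apply]
    push_cast
    ring
  have h := h1.add h2
  refine h.congr_deriv ?_
  symm
  have hpy := Real.sin_sq_add_cos_sq (π*x)
  linear_combination (-((2*(e:ℝ)+2)*(2*e+1)*π^2*Real.sin (π*x)^(2*e)*Real.cos (k*x))) * hpy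

noncomputable def Jint (n : ℕ) (k : ℝ) : ℝ := ∫ ℓ in (0:ℝ)..1, Real.sin (π*ℓ)^(2*n) * Real.cos (k*ℓ)

lemma cont_integrand (n : ℕ) (k : ℝ) :
    IntervalIntegrable (fun ℓ : ℝ => Real.sin (π*ℓ)^(2*n) * Real.cos (k*ℓ)) MeasureTheory.volume 0 1 := by
  apply Continuous.intervalIntegrable; fun_prop

lemma step_rel (e : ℕ) (k : ℝ) :
    (k^2 - (2*e+2)^2*π^2) * Jint (e+1) k + (2*e+2)*(2*e+1)*π^2 * Jint e k = 0 := by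
  have hint : IntervalIntegrable (fun x : ℝ =>
      (k^2 - (2*e+2)^2*π^2) * Real.sin (π*x)^(2*e+2) * Real.cos (k*x)
        + (2*e+2)*(2*e+1)*π^2 * Real.sin (π*x)^(2*e) * Real.cos (k*x)) MeasureTheory.volume 0 1 := by
    apply Continuous.intervalIntegrable; fun_prop
  have hz := intervalIntegral.integral_eq_sub_of_hasDerivAt (fun x _ => hd_H e k x) hint
  simp only [mul_one, mul_zero, Real.sin_pi, Real.sin_zero, zero_pow (show 2*e+2 ≠ 0 by omega),
    zero_pow (show 2*e+1 ≠ 0 by omega), zero_mul, add_zero, sub_zero, zero_add, mul_zero,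
    zero_sub, neg_zero] at hz
  have key : (∫ x in (0:ℝ)..1, ((k^2 - (2*e+2)^2*π^2) * (Real.sin (π*x)^(2*(e+1)) * Real.cos (k*x))
        + ((2*e+2)*(2*e+1)*π^2) * (Real.sin (π*x)^(2*e) * Real.cos (k*x))))
      = (k^2 - (2*e+2)^2*π^2) * Jint (e+1) k + (2*e+2)*(2*e+1)*π^2 * Jint e k := by
    rw [intervalIntegral.integral_add ((cont_integrand (e+1) k).const_mul _)
        ((cont_integrand e k).const_mul _), intervalIntegral.integral_const_mul,
      intervalIntegral.integral_const_mul]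
    rfl
  calc (k^2 - (2*e+2)^2*π^2) * Jint (e+1) k + (2*e+2)*(2*e+1)*π^2 * Jint e k
      = ∫ x in (0:ℝ)..1, ((k^2 - (2*e+2)^2*π^2) * (Real.sin (π*x)^(2*(e+1)) * Real.cos (k*x))
        + ((2*e+2)*(2*e+1)*π^2) * (Real.sin (π*x)^(2*e) * Real.cos (k*x))) := key.symm
    _ = ∫ x in (0:ℝ)..1, ((k^2 - (2*e+2)^2*π^2) * Real.sin (π*x)^(2*e+2) * Real.cos (k*x)
        + (2*e+2)*(2*e+1)*π^2 * Real.sin (π*x)^(2*e) * Real.cos (k*x)) := by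
        apply intervalIntegral.integral_congr; intro x _
        have : 2*(e+1) = 2*e+2 := by ring
        rw [this]; ring
    _ = 0 := hz

lemma Jint_zero (k : ℝ) (hk : k ≠ 0) : Jint 0 k = Real.sin k / k := by
  unfold Jint
  simp only [mul_zero, pow_zero, one_mul]
  have hd : ∀ x ∈ Set.uIcc (0:ℝ) 1, HasDerivAt (fun ℓ : ℝ => Real.sin (k*ℓ)/k) (Real.cos (k*x)) x := by
    intro x _
    have h := (Real.hasDerivAt_sin (k*x)).comp x ((hasDerivAt_id x).const_mul k)
    have h2 := h.div_const k
    simp only [Function.comp_def] at h2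
    refine h2.congr_deriv ?_
    field_simp
  rw [intervalIntegral.integral_eq_sub_of_hasDerivAt hd
    (by apply Continuous.intervalIntegrable; fun_prop)]
  simp

lemma J_formula (k : ℝ) (hk : k ≠ 0) (d : ℕ) :
    Jint d k * (k * ∏ j ∈ Finset.range d, (4*(j+1:ℝ)^2*π^2 - k^2))
      = Real.sin k * ((2*d).factorial : ℝ) * π^(2*d) := by
  induction d with
  | zero => simp [Jint_zero k hk, div_mul_cancel₀ _ hk]
  | succ e ih =>
    have hs := step_rel e k
    have hfac : (((2*(e+1)).factorial : ℕ) : ℝ)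
        = (2*e+2) * (2*e+1) * ((2*e).factorial : ℝ) := by
      have : 2*(e+1) = (2*e+1)+1 := by ring
      rw [this, Nat.factorial_succ, Nat.factorial_succ]
      push_cast
      ring
    rw [Finset.prod_range_succ, hfac]
    have key : Jint (e+1) k * (4*(e+1:ℝ)^2*π^2 - k^2) = (2*e+2)*(2*e+1)*π^2 * Jint e k := by
      push_cast
      linear_combination -hs
    calc Jint (e+1) k * (k * ((∏ j ∈ Finset.range e, (4*(j+1:ℝ)^2*π^2 - k^2)) * (4*(e+1:ℝ)^2*π^2 - k^2)))
        = (Jint (e+1) k * (4*(e+1:ℝ)^2*π^2 - k^2)) * (k * ∏ j ∈ Finset.range e, (4*(j+1:ℝ)^2*π^2 - k^2)) := by ring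
      _ = ((2*e+2)*(2*e+1)*π^2) * (Jint e k * (k * ∏ j ∈ Finset.range e, (4*(j+1:ℝ)^2*π^2 - k^2))) := by rw [key]; ring
      _ = ((2*e+2)*(2*e+1)*π^2) * (Real.sin k * ((2*e).factorial : ℝ) * π^(2*e)) := by rw [ih]
      _ = Real.sin k * ((2*(e:ℝ)+2) * (2*e+1) * ((2*e).factorial : ℝ)) * π^(2*(e+1)) := by ring

theorem re_fourier_phi_d_bound (d : ℕ) (hd : 0 < d) (k : ℝ) (hk : k > 2 * π * d) :
    |∫ ℓ in (0:ℝ)..1,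
        (2 ^ d * (d.factorial : ℝ) ^ 2 / ((2 * d).factorial : ℝ))
          * (1 - Real.cos (2 * π * ℓ)) ^ d * Real.cos (k * ℓ)|
      ≤ (d.factorial : ℝ) ^ 2 / (2 * π * (k / (2 * π) - d) ^ (2 * d + 1)) := by
  have hπ : (0:ℝ) < π := Real.pi_pos
  have hdpos : (0:ℝ) < d := by exact_mod_cast hd
  have hm : 0 < k - 2*π*d := by linarith
  have hkpos : 0 < k := by nlinarith
  set C : ℝ := 2 ^ d * (d.factorial : ℝ) ^ 2 / ((2 * d).factorial : ℝ) with hC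
  have hfacpos : (0:ℝ) < ((2*d).factorial : ℝ) := by exact_mod_cast (2*d).factorial_pos
  have hCpos : 0 < C := by positivity
  have hTeq : (∫ ℓ in (0:ℝ)..1, C * (1 - Real.cos (2 * π * ℓ)) ^ d * Real.cos (k * ℓ))
      = (C * 2^d) * Jint d k := by
    rw [show (C * 2^d) * Jint d k = ∫ ℓ in (0:ℝ)..1,
        (C * 2^d) * (Real.sin (π*ℓ)^(2*d) * Real.cos (k*ℓ)) from by
      rw [intervalIntegral.integral_const_mul]; rfl]
    apply intervalIntegral.integral_congr
    intro ℓ _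
    show C * (1 - Real.cos (2 * π * ℓ)) ^ d * Real.cos (k * ℓ)
        = (C * 2^d) * (Real.sin (π*ℓ)^(2*d) * Real.cos (k*ℓ))
    have h1 : 1 - Real.cos (2*π*ℓ) = 2 * Real.sin (π*ℓ)^2 := by
      have h2 := Real.cos_two_mul (π*ℓ)
      have h3 := Real.sin_sq_add_cos_sq (π*ℓ)
      have h4 : 2*π*ℓ = 2*(π*ℓ) := by ring
      rw [h4, h2]
      linarith
    rw [h1, mul_pow, ← pow_mul]
    ring
  set Q : ℝ := k * ∏ j ∈ Finset.range d, (4*(j+1:ℝ)^2*π^2 - k^2) with hQ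
  set m : ℝ := k - 2*π*d with hm'
  have hQabs : m^(2*d+1) ≤ |Q| := by
    rw [hQ, abs_mul, Finset.abs_prod]
    have h1 : ∀ j ∈ Finset.range d, m^2 ≤ |4*(j+1:ℝ)^2*π^2 - k^2| := by
      intro j hj
      have hjd : (j:ℝ)+1 ≤ d := by exact_mod_cast Finset.mem_range.mp hj
      have hlt : 2*π*((j:ℝ)+1) ≤ 2*π*d := by nlinarith
      have hkj : 0 < k - 2*π*((j:ℝ)+1) := by rw [hm'] at hm; linarith
      have hkj2 : 0 < k + 2*π*((j:ℝ)+1) := by positivity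
      have hfac : 4*((j:ℝ)+1)^2*π^2 - k^2 = -((k - 2*π*((j:ℝ)+1))*(k + 2*π*((j:ℝ)+1))) := by ring
      rw [hfac, abs_neg, abs_of_nonneg (by positivity)]
      have h4 : m ≤ k - 2*π*((j:ℝ)+1) := by rw [hm']; linarith
      have h5 : m ≤ k + 2*π*((j:ℝ)+1) := by rw [hm']; nlinarith
      nlinarith [hm]
    calc m^(2*d+1) = m * ∏ _j ∈ Finset.range d, m^2 := by
          rw [Finset.prod_const, Finset.card_range, ← pow_mul, pow_succ]; ring
      _ ≤ |k| * ∏ j ∈ Finset.range d, |4*(j+1:ℝ)^2*π^2 - k^2| := by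
          apply mul_le_mul
          · rw [abs_of_pos hkpos, hm']; nlinarith
          · exact Finset.prod_le_prod (fun j _ => by positivity) h1
          · exact Finset.prod_nonneg (fun j _ => by positivity)
          · positivity
  have hMpos : (0:ℝ) < m^(2*d+1) := by positivity
  have hQne : Q ≠ 0 := by
    intro h
    rw [h, abs_zero] at hQabs
    linarith
  have hJ := J_formula k (ne_of_gt hkpos) d
  have hJval : Jint d k = Real.sin k * ((2*d).factorial : ℝ) * π^(2*d) / Q := by
    rw [eq_div_iff hQne]
    exact hJ
  set A : ℝ := 4^d * (d.factorial : ℝ)^2 * π^(2*d) with hA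
  have hApos : 0 < A := by positivity
  have hTval : (∫ ℓ in (0:ℝ)..1, C * (1 - Real.cos (2 * π * ℓ)) ^ d * Real.cos (k * ℓ))
      = Real.sin k * A / Q := by
    rw [hTeq, hJval, hA, hC]
    rw [show (4:ℝ)^d = 2^d * 2^d from by rw [← mul_pow]; norm_num]
    field_simp
  rw [hTval]
  have hpow : ((2*π):ℝ)^(2*d) = 4^d * π^(2*d) := by
    rw [pow_mul, show ((2*π):ℝ)^2 = 4*π^2 from by ring, mul_pow, ← pow_mul]
  have hRHS : (d.factorial : ℝ) ^ 2 / (2 * π * (k / (2 * π) - d) ^ (2 * d + 1)) = A / m^(2*d+1) := by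
    have h1 : k / (2*π) - d = m / (2*π) := by
      rw [hm']; field_simp
    rw [h1, div_pow, hA]
    rw [div_eq_div_iff (by positivity) hMpos.ne']
    rw [pow_succ ((2:ℝ)*π), hpow]
    field_simp
  rw [hRHS, abs_div]
  apply div_le_div₀ hApos.le ?_ hMpos hQabs
  rw [abs_mul, abs_of_pos hApos]
  nlinarith [Real.abs_sin_le_one k, hApos, abs_nonneg (Real.sin k)]
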